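/- Let n ≥ 1 and let β ∈ ℂ with β ≠ 0, and define P̄_n(z) = (1 − z/β)^n · Σ_{j=0}^{n−1} (z/β)^j · (n+j−1)!/(j!(n−1)!). Then P̄_n(z) + P̄_n(β − z) = 1 for every z ∈ ℂ. -/

import Mathlib

open Finset

noncomputable def Sfun (m : ℕ) (x : ℂ) : ℂ :=
  ∑ j ∈ Finset.range (m+1), x ^ j * (Nat.choose (m+j) j : ℂ)

noncomputable def Ffun (m : ℕ) (x : ℂ) : ℂ := (1 - x) ^ (m+1) * Sfun m x

lemma keyA (m : ℕ) (x : ℂ) :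
    (1 - x) * Sfun (m+1) x - Sfun m x
      = (Nat.choose (2*m+1) (m+1) : ℂ) * x ^ (m+1) * (1 - 2*x) := by
  set b : ℕ → ℂ := fun j => ((m+1+j).choose j : ℂ) with hbdef
  set a : ℕ → ℂ := fun j => ((m+j).choose j : ℂ) with hadef
  have hnat : ∀ j, (m+1+(j+1)).choose (j+1) = (m+1+j).choose j + (m+(j+1)).choose (j+1) := by
    intro j
    have e1 : m+1+(j+1) = (m+j+1)+1 := by omega
    have e2 : m+1+j = m+j+1 := by omega
    have e3 : m+(j+1) = m+j+1 := by omega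
    rw [e1, e2, e3, Nat.choose_succ_succ]
  have hb : ∀ j, b (j+1) = b j + a (j+1) := by
    intro j
    simp only [hbdef, hadef]
    exact_mod_cast hnat j
  have h1 : Sfun (m+1) x = (∑ j ∈ range (m+1), x ^ j * b j) + x ^ (m+1) * b (m+1) := by
    rw [Sfun, Finset.sum_range_succ]
  have h2 : x * Sfun (m+1) x
      = (∑ j ∈ range m, x ^ (j+1) * b j) + x ^ (m+1) * b m + x ^ (m+2) * b (m+1) := by
    rw [Sfun, Finset.mul_sum, Finset.sum_range_succ, Finset.sum_range_succ]
    simp only [hbdef]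
    rw [show (∑ j ∈ range m, x * (x ^ j * ((m+1+j).choose j : ℂ)))
        = ∑ j ∈ range m, x ^ (j+1) * ((m+1+j).choose j : ℂ) from
      Finset.sum_congr rfl fun j _ => by ring]
    ring
  have h3 : (∑ j ∈ range (m+1), x ^ j * b j) - Sfun m x = ∑ j ∈ range m, x ^ (j+1) * b j := by
    rw [Sfun, ← Finset.sum_sub_distrib, Finset.sum_range_succ']
    have h0 : x ^ 0 * b 0 - x ^ 0 * a 0 = 0 := by
      simp [hbdef, hadef]
    rw [h0, add_zero]
    exact Finset.sum_congr rfl (fun j _ => by rw [hb j]; ring)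
  have hc1 : b (m+1) = b m + ((2*m+1).choose (m+1) : ℂ) := by
    simp only [hbdef]
    have : (m+1+(m+1)).choose (m+1) = (m+1+m).choose m + (2*m+1).choose (m+1) := by
      have e1 : m+1+(m+1) = (2*m+1)+1 := by omega
      have e2 : m+1+m = 2*m+1 := by omega
      have e3 : m+(m+1) = 2*m+1 := by omega
      rw [e1, Nat.choose_succ_succ, e2]
    exact_mod_cast this
  have hsym : (2*m+1).choose m = (2*m+1).choose (m+1) := by
    have h := Nat.choose_symm (show m+1 ≤ 2*m+1 by omega)
    rwa [show 2*m+1-(m+1) = m by omega] at h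
  have hbm : b m = ((2*m+1).choose (m+1) : ℂ) := by
    simp only [hbdef]
    rw [show m+1+m = 2*m+1 by omega]
    exact_mod_cast hsym
  have expand : (1 - x) * Sfun (m+1) x - Sfun m x
      = ((∑ j ∈ range (m+1), x ^ j * b j) - Sfun m x)
        - (∑ j ∈ range m, x ^ (j+1) * b j)
        + x ^ (m+1) * (b (m+1) - b m) - x ^ (m+2) * b (m+1) := by
    have hh : (1 - x) * Sfun (m+1) x = Sfun (m+1) x - x * Sfun (m+1) x := by ring
    rw [hh, h2, h1]
    ring
  rw [expand, h3, sub_self, zero_add, hc1, hbm]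
  ring

lemma Ffun_succ (m : ℕ) (x : ℂ) :
    Ffun (m+1) x = Ffun m x
      + ((2*m+1).choose (m+1) : ℂ) * x ^ (m+1) * (1-x) ^ (m+1) * (1 - 2*x) := by
  have h := keyA m x
  have hh : Ffun (m+1) x = (1-x) ^ (m+1) * ((1 - x) * Sfun (m+1) x) := by
    rw [Ffun]; ring
  rw [hh, show (1 - x) * Sfun (m+1) x
      = Sfun m x + ((2*m+1).choose (m+1) : ℂ) * x ^ (m+1) * (1 - 2*x) by linear_combination h,
    Ffun]
  ring

lemma Ffun_symm (m : ℕ) (x : ℂ) : Ffun m x + Ffun m (1 - x) = 1 := by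
  induction m with
  | zero => simp [Ffun, Sfun]
  | succ m ih =>
    rw [Ffun_succ, Ffun_succ]
    have h1 : (1 : ℂ) - (1 - x) = x := by ring
    rw [h1]
    linear_combination ih + (((2*m+1).choose (m+1) : ℂ) * x ^ (m+1) * (1-x) ^ (m+1)) *
      (by ring : (1 - 2*x) + (1 - 2*(1-x)) = (0:ℂ))

/-- The ensemble average polynomial
`P̄_n(z) = (1 - z/β)^n ∑_{j=0}^{n-1} (z/β)^j (n+j-1)!/(j!(n-1)!)`. -/
noncomputable def ensembleAvg (n : ℕ) (β : ℂ) (z : ℂ) : ℂ :=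
  (1 - z / β) ^ n * ∑ j ∈ Finset.range n,
    (z / β) ^ j *
      ((Nat.factorial (n + j - 1) : ℂ) /
        ((Nat.factorial j : ℂ) * (Nat.factorial (n - 1) : ℂ)))

lemma ensembleAvg_eq (m : ℕ) (β z : ℂ) :
    ensembleAvg (m+1) β z = Ffun m (z / β) := by
  rw [ensembleAvg, Ffun, Sfun]
  congr 1
  apply Finset.sum_congr rfl
  intro j _
  congr 1
  have e1 : m+1+j-1 = m+j := by omega
  have e2 : m+1-1 = m := by omega
  rw [e1, e2]
  have h := Nat.choose_mul_factorial_mul_factorial (show j ≤ m + j by omega)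
  rw [show m + j - j = m by omega] at h
  have hj : (Nat.factorial j : ℂ) ≠ 0 := Nat.cast_ne_zero.mpr (Nat.factorial_ne_zero j)
  have hm : (Nat.factorial m : ℂ) ≠ 0 := Nat.cast_ne_zero.mpr (Nat.factorial_ne_zero m)
  field_simp
  have hnat2 : (m+j).factorial = (m+j).choose j * (j.factorial * m.factorial) := by
    rw [← h]; ring
  exact_mod_cast hnat2.trans (Nat.mul_comm _ _)

/-- Symmetry of the ensemble average polynomial: `P̄_n(z) + P̄_n(β - z) = 1`. -/
theorem ensembleAvg_symmetry (n : ℕ) (hn : 1 ≤ n) (β : ℂ) (hβ : β ≠ 0) :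
    ∀ z : ℂ, ensembleAvg n β z + ensembleAvg n β (β - z) = 1 := by
  intro z
  obtain ⟨m, rfl⟩ : ∃ m, n = m + 1 := ⟨n - 1, by omega⟩
  rw [ensembleAvg_eq, ensembleAvg_eq]
  have : (β - z) / β = 1 - z / β := by field_simp
  rw [this]
  exact Ffun_symm m (z / β)
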